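/- Let G be a module over a ring with an exhaustive increasing filtration F_• by submodules, and let N : G → G be a nilpotent module endomorphism with N(F_b) ⊆ F_{b+1} for all b. Assume every power of N is strict, i.e. N^a(F_b G) = F_{a+b} G ∩ N^a(G) for all a ≥ 0 and b ∈ ℤ. Then for every r ≥ 0 and ℓ ∈ ℤ, the induced map N^r : F_ℓ gr^W_r G → F_{ℓ+r} gr^W_{-r} G is an isomorphism, where W_• is the monodromy filtration of N and F_ℓ gr^W_r denotes the image of F_ℓ G ∩ W_r G in gr^W_r G. -/
import Mathlib


/-- `W` is a monodromy filtration for the nilpotent endomorphism `N` of a module. -/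
def IsMonodromyFiltration {R : Type*} [CommRing R] {G : Type*} [AddCommGroup G]
    [Module R G] (N : G →ₗ[R] G) (W : ℤ → Submodule R G) : Prop :=
  Monotone W ∧ (∃ a : ℤ, W a = ⊥) ∧ (∃ b : ℤ, W b = ⊤) ∧
  (∀ ℓ : ℤ, (W ℓ).map N ≤ W (ℓ - 2)) ∧
  (∀ ℓ : ℕ,
    (∀ x ∈ W (ℓ : ℤ), (N ^ ℓ) x ∈ W (-(ℓ : ℤ) - 1) → x ∈ W ((ℓ : ℤ) - 1)) ∧
    (∀ y ∈ W (-(ℓ : ℤ)), ∃ x ∈ W (ℓ : ℤ), (N ^ ℓ) x - y ∈ W (-(ℓ : ℤ) - 1)))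

/-- If every power of the nilpotent filtered endomorphism `N` is strict with respect
to the exhaustive increasing filtration `F`, then for every `r ≥ 0` and `ℓ ∈ ℤ` the
induced map `N^r : F_ℓ gr^W_r G → F_{ℓ+r} gr^W_{-r} G` is an isomorphism, where `W`
is the monodromy filtration of `N` and `F_ℓ gr^W_r` is the image of `F ℓ ⊓ W r` in
`gr^W_r`.  Injectivity and surjectivity are expressed on representatives. -/
theorem strict_powers_gr_iso
    (R : Type*) [CommRing R] (G : Type*) [AddCommGroup G] [Module R G]
    (N : G →ₗ[R] G) (hN : IsNilpotent N)
    (F : ℤ → Submodule R G) (hFmono : Monotone F) (hFexh : (⨆ b : ℤ, F b) = ⊤)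
    (hNF : ∀ b : ℤ, (F b).map N ≤ F (b + 1))
    (hstrict : ∀ (a : ℕ) (b : ℤ),
      (F b).map (N ^ a) = F ((a : ℤ) + b) ⊓ LinearMap.range (N ^ a))
    (W : ℤ → Submodule R G) (hW : IsMonodromyFiltration N W)
    (r : ℕ) (ℓ : ℤ) :
    (∀ x ∈ F ℓ ⊓ W (r : ℤ), (N ^ r) x ∈ W (-(r : ℤ) - 1) → x ∈ W ((r : ℤ) - 1)) ∧
    (∀ y ∈ F (ℓ + r) ⊓ W (-(r : ℤ)),
      ∃ x ∈ F ℓ ⊓ W (r : ℤ), (N ^ r) x - y ∈ W (-(r : ℤ) - 1)) := by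
  obtain ⟨hWmono, ⟨a, ha⟩, ⟨b, hb⟩, hWN, hWiso⟩ := hW
  -- powers of `N` lower the weight filtration by twice the exponent
  have hBpow : ∀ (k : ℕ) (m : ℤ) (x : G), x ∈ W m → (N ^ k) x ∈ W (m - 2 * k) := by
    intro k
    induction k with
    | zero => intro m x hx; simpa using hx
    | succ k ih =>
        intro m x hx
        have h1 : (N ^ k) x ∈ W (m - 2 * k) := ih m x hx
        have h2 : N ((N ^ k) x) ∈ W (m - 2 * k - 2) := hWN _ ⟨_, h1, rfl⟩
        have h3 : (N ^ (k + 1)) x = N ((N ^ k) x) := by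
          rw [pow_succ']; rfl
        have h4 : m - 2 * ((k : ℤ) + 1) = m - 2 * k - 2 := by ring
        rw [h3]
        push_cast
        rw [h4]
        exact h2
  -- `W (-r - k) ⊆ N^r (W r)` for every `k : ℕ`
  have hA : ∀ (j k : ℕ), -(r : ℤ) - k ≤ a + j → ∀ y ∈ W (-(r : ℤ) - k),
      ∃ x ∈ W (r : ℤ), (N ^ r) x = y := by
    intro j
    induction j with
    | zero =>
        intro k hk y hy
        have : y ∈ W a := hWmono (by simpa using hk) hy
        rw [ha] at this
        have hy0 : y = 0 := (Submodule.mem_bot _).mp this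
        exact ⟨0, Submodule.zero_mem _, by simp [hy0]⟩
    | succ j ih =>
        intro k hk y hy
        have hy' : y ∈ W (-((r + k : ℕ) : ℤ)) := by
          have : -(((r + k : ℕ) : ℤ)) = -(r : ℤ) - k := by push_cast; ring
          rw [this]; exact hy
        obtain ⟨z, hz, hzy⟩ := (hWiso (r + k)).2 y hy'
        have hzy' : (N ^ (r + k)) z - y ∈ W (-(r : ℤ) - (k + 1 : ℕ)) := by
          have : -(((r + k : ℕ) : ℤ)) - 1 = -(r : ℤ) - ((k + 1 : ℕ) : ℤ) := by
            push_cast; ring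
          rw [← this]; exact hzy
        obtain ⟨x', hx', hx'eq⟩ := ih (k + 1) (by push_cast at hk ⊢; linarith)
          _ hzy'
        refine ⟨(N ^ k) z - x', ?_, ?_⟩
        · have h1 : (N ^ k) z ∈ W (((r + k : ℕ) : ℤ) - 2 * k) := hBpow k _ z hz
          have h2 : (N ^ k) z ∈ W (r : ℤ) := by
            refine hWmono ?_ h1
            push_cast
            have : (0 : ℤ) ≤ (k : ℤ) := Int.natCast_nonneg k
            linarith
          exact Submodule.sub_mem _ h2 hx'
        · have h3 : (N ^ (r + k)) z = (N ^ r) ((N ^ k) z) := by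
            rw [pow_add]; rfl
          rw [map_sub, ← h3, hx'eq]
          abel
  constructor
  · -- injectivity on graded pieces: direct from the monodromy axiom
    intro x hx hNx
    exact (hWiso r).1 x hx.2 hNx
  · intro y hy
    -- `y ∈ N^r G`
    have hy0 : y ∈ W (-(r : ℤ) - (0 : ℕ)) := by simpa using hy.2
    have hja : -(r : ℤ) - (0 : ℕ) ≤ a + ((-a - (r : ℤ)).toNat : ℤ) := by
      have := Int.self_le_toNat (-a - (r : ℤ))
      push_cast
      linarith
    obtain ⟨x₀, hx₀W, hx₀⟩ := hA (-a - (r : ℤ)).toNat 0 hja y hy0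
    have hyrange : y ∈ LinearMap.range (N ^ r) := ⟨x₀, hx₀⟩
    -- strictness: `y = N^r u` with `u ∈ F ℓ`
    have hymem : y ∈ (F ℓ).map (N ^ r) := by
      rw [hstrict r ℓ]
      refine ⟨?_, hyrange⟩
      have : ℓ + (r : ℤ) = (r : ℤ) + ℓ := by ring
      rw [← this]; exact hy.1
    obtain ⟨u, hu, huy⟩ := hymem
    -- chase `u` down into `W r`
    have hC : ∀ (d : ℕ) (u : G), u ∈ W ((r : ℤ) + d) → (N ^ r) u ∈ W (-(r : ℤ)) →
        u ∈ W (r : ℤ) := by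
      intro d
      induction d with
      | zero => intro u hu _; simpa using hu
      | succ d ih =>
          intro u hu hNu
          have hu' : u ∈ W (((r + d + 1 : ℕ) : ℤ)) := by
            have : ((r + d + 1 : ℕ) : ℤ) = (r : ℤ) + ((d + 1 : ℕ) : ℤ) := by push_cast; ring
            rw [this]; exact hu
          have hNs : (N ^ (r + d + 1)) u ∈ W (-((r + d + 1 : ℕ) : ℤ) - 1) := by
            have h1 : (N ^ (r + d + 1)) u = (N ^ (d + 1)) ((N ^ r) u) := by
              rw [show r + d + 1 = (d + 1) + r by ring, pow_add]; rfl
            have h2 : (N ^ (d + 1)) ((N ^ r) u) ∈ W (-(r : ℤ) - 2 * ((d + 1 : ℕ) : ℤ)) :=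
              hBpow (d + 1) _ _ hNu
            rw [h1]
            refine hWmono ?_ h2
            push_cast
            have : (0 : ℤ) ≤ (d : ℤ) := Int.natCast_nonneg d
            linarith
          have := (hWiso (r + d + 1)).1 u hu' hNs
          refine ih u ?_ hNu
          have heq : ((r + d + 1 : ℕ) : ℤ) - 1 = (r : ℤ) + ((d : ℕ) : ℤ) := by push_cast; ring
          rw [heq] at this
          exact this
    have hub : u ∈ W b := by rw [hb]; trivial
    set d : ℕ := (b - (r : ℤ)).toNat with hd
    have hud : u ∈ W ((r : ℤ) + d) := by
      refine hWmono ?_ hub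
      have := Int.self_le_toNat (b - (r : ℤ))
      linarith
    have hNru : (N ^ r) u ∈ W (-(r : ℤ)) := by rw [huy]; exact hy.2
    have huW : u ∈ W (r : ℤ) := hC d u hud hNru
    exact ⟨u, ⟨hu, huW⟩, by rw [huy]; simp⟩
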